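/- Fix natural numbers N, M ≥ 1 and let d = min(N, M). Consider the matrix rank function rank : ℝ^{N×M} → ℕ, where the space of real N×M matrices carries its usual Euclidean topology. Then rank is (d+1)-continuous (being constant on each of the sets {A : rank A = k}, k = 0,…,d), but rank is not d-continuous. Hence the minimal number of pieces into which ℝ^{N×M} can be partitioned so that rank is continuous on each piece equals d+1. -/

import Mathlib

open Matrix Finset

/-- Rank does not increase under arbitrary submatrices (over ℝ). -/
lemma rank_submatrix_le'' {l m n o : Type*} [Fintype l] [Fintype m] [Fintype n] [Fintype o]
    [DecidableEq m] [DecidableEq n]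
    (A : Matrix m n ℝ) (f : l → m) (g : o → n) :
    (A.submatrix f g).rank ≤ A.rank := by
  have h1 : ((1 : Matrix m m ℝ).submatrix f (Equiv.refl m)) * A = A.submatrix f id := by
    rw [Matrix.one_submatrix_mul]
    rfl
  have h2 : (A.submatrix f id) * ((1 : Matrix n n ℝ).submatrix (Equiv.refl n) g)
      = A.submatrix f g := by
    rw [Matrix.mul_submatrix_one]
    simp [Matrix.submatrix_submatrix]
  calc (A.submatrix f g).rank
      = ((A.submatrix f id) * ((1 : Matrix n n ℝ).submatrix (Equiv.refl n) g)).rank := by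
        rw [h2]
    _ ≤ (A.submatrix f id).rank := Matrix.rank_mul_le_left _ _
    _ = (((1 : Matrix m m ℝ).submatrix f (Equiv.refl m)) * A).rank := by rw [h1]
    _ ≤ A.rank := Matrix.rank_mul_le_right _ _

section Construction

variable (N M : ℕ)

/-- Pad a vector of length `min N M` by zeros to length `max N M`. -/
def padVec (s : Fin (min N M) → ℝ) : Fin (max N M) → ℝ :=
  fun i => if h : (i : ℕ) < min N M then s ⟨i, h⟩ else 0

/-- The `N × M` matrix with `s` on the main diagonal and zeros elsewhere. -/
def Amat (s : Fin (min N M) → ℝ) : Matrix (Fin N) (Fin M) ℝ :=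
  (Matrix.diagonal (padVec N M s)).submatrix
    (Fin.castLE (le_max_left N M)) (Fin.castLE (le_max_right N M))

lemma Amat_continuous : Continuous (Amat N M) := by
  apply continuous_pi; intro i; apply continuous_pi; intro j
  unfold Amat padVec
  simp only [Matrix.submatrix_apply, Matrix.diagonal_apply]
  by_cases h : Fin.castLE (le_max_left N M) i = Fin.castLE (le_max_right N M) j
  · simp only [h, if_pos]
    by_cases h2 : ((Fin.castLE (le_max_right N M) j : Fin (max N M)) : ℕ) < min N M
    · simp only [h2, dif_pos]
      exact continuous_apply _
    · simp only [h2, dif_neg, not_false_iff]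
      exact continuous_const
  · simp only [h, if_neg, not_false_iff]
    exact continuous_const

lemma diag_eq_submatrix_Amat (s : Fin (min N M) → ℝ) :
    Matrix.diagonal s = (Amat N M s).submatrix
      (Fin.castLE (min_le_left N M)) (Fin.castLE (min_le_right N M)) := by
  ext i j
  simp only [Amat, padVec, Matrix.submatrix_apply, Matrix.diagonal_apply]
  by_cases h : i = j
  · subst h
    simp only [if_pos rfl]
    have hc : (Fin.castLE (le_max_left N M) (Fin.castLE (min_le_left N M) i) : Fin (max N M))
        = Fin.castLE (le_max_right N M) (Fin.castLE (min_le_right N M) i) := by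
      apply Fin.ext; simp
    rw [if_pos hc]
    have hi : ((Fin.castLE (le_max_left N M) (Fin.castLE (min_le_left N M) i) : Fin (max N M)) : ℕ)
        < min N M := by simpa using i.isLt
    rw [dif_pos hi]
    simp only [if_true]
    congr 1
  · rw [if_neg h]
    have hc : ¬ (Fin.castLE (le_max_left N M) (Fin.castLE (min_le_left N M) i) : Fin (max N M))
        = Fin.castLE (le_max_right N M) (Fin.castLE (min_le_right N M) j) := by
      intro hcc
      apply h
      apply Fin.ext
      simpa [Fin.ext_iff] using hcc
    rw [if_neg hc]

lemma rank_Amat (s : Fin (min N M) → ℝ) :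
    (Amat N M s).rank = (Finset.univ.filter (fun j => s j ≠ 0)).card := by
  classical
  have hle1 : (Matrix.diagonal s).rank ≤ (Amat N M s).rank := by
    rw [diag_eq_submatrix_Amat]
    exact rank_submatrix_le'' _ _ _
  have hle2 : (Amat N M s).rank ≤ (Matrix.diagonal (padVec N M s)).rank :=
    rank_submatrix_le'' _ _ _
  have hd1 : (Matrix.diagonal s).rank = Fintype.card {j // s j ≠ 0} :=
    Matrix.rank_diagonal s
  have hd2 : (Matrix.diagonal (padVec N M s)).rank
      = Fintype.card {i // padVec N M s i ≠ 0} :=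
    Matrix.rank_diagonal _
  have hcard : Fintype.card {i // padVec N M s i ≠ 0} = Fintype.card {j // s j ≠ 0} := by
    apply Fintype.card_congr
    refine ⟨fun ⟨i, hi⟩ => ⟨⟨(i : ℕ), ?_⟩, ?_⟩, fun ⟨j, hj⟩ => ⟨Fin.castLE (min_le_max) j, ?_⟩,
      ?_, ?_⟩
    · by_contra hlt
      exact hi (by simp [padVec, hlt])
    · simp only [padVec] at hi
      by_cases hlt : (i : ℕ) < min N M
      · rw [dif_pos hlt] at hi; exact hi
      · exact absurd (by simp [padVec, hlt]) hi
    · simpa [padVec, j.isLt] using hj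
    · intro ⟨i, hi⟩; apply Subtype.ext; apply Fin.ext; simp
    · intro ⟨j, hj⟩; apply Subtype.ext; apply Fin.ext; simp
  have : Fintype.card {j // s j ≠ 0} = (Finset.univ.filter (fun j => s j ≠ 0)).card := by
    rw [Fintype.card_subtype]
  omega

lemma rank_Amat_of_pattern (s : Fin (min N M) → ℝ) (T : Finset (Fin (min N M)))
    (hpat : ∀ j, s j ≠ 0 ↔ j ∈ T) : (Amat N M s).rank = T.card := by
  rw [rank_Amat]
  congr 1
  ext j
  simp [hpat j]

end Construction

/-- Key lower-bound lemma: any piecewise-continuous decomposition of `rank`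
into `n` pieces covering everything forces `min N M + 1 ≤ n`. -/
lemma rank_pieces_lower_bound (N M : ℕ) (n : ℕ)
    (D : Fin n → Set (Matrix (Fin N) (Fin M) ℝ))
    (hcov : (⋃ i, D i) = Set.univ)
    (hcont : ∀ i, ContinuousOn (fun A : Matrix (Fin N) (Fin M) ℝ => A.rank) (D i)) :
    min N M + 1 ≤ n := by
  classical
  set d := min N M with hd
  have key : ∀ k : ℕ, k ≤ d → ∃ (s : Fin d → ℝ) (T : Finset (Fin d)) (S : Finset (Fin n))
      (V : Set (Fin d → ℝ)),
      IsOpen V ∧ s ∈ V ∧ (∀ j, s j ≠ 0 ↔ j ∈ T) ∧ T.card = k ∧ S.card = k ∧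
      (∀ i ∈ S, ∀ t ∈ V, Amat N M t ∈ D i → (Amat N M t).rank < k) := by
    intro k
    induction k with
    | zero =>
      intro _
      exact ⟨0, ∅, ∅, Set.univ, isOpen_univ, Set.mem_univ _, by simp, rfl, rfl, by simp⟩
    | succ k ih =>
      intro hk
      obtain ⟨s, T, S, V, hVopen, hsV, hpat, hTcard, hScard, hinv⟩ := ih (Nat.le_of_succ_le hk)
      have hrank : (Amat N M s).rank = k := by
        rw [rank_Amat_of_pattern N M s T hpat, hTcard]
      obtain ⟨i₀, hi₀⟩ : ∃ i, Amat N M s ∈ D i := by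
        have : Amat N M s ∈ ⋃ i, D i := by rw [hcov]; exact Set.mem_univ _
        exact Set.mem_iUnion.mp this
      have hi₀S : i₀ ∉ S := by
        intro h
        exact absurd hrank (Nat.ne_of_lt (hinv i₀ h s hsV hi₀))
      -- continuity at `Amat N M s` within `D i₀` gives an open `W`
      have hmem : {A : Matrix (Fin N) (Fin M) ℝ | A.rank = k}
          ∈ nhdsWithin (Amat N M s) (D i₀) := by
        have hsing : {x : ℕ | x = (Amat N M s).rank} ∈ nhds ((Amat N M s).rank) := by
          have : ({(Amat N M s).rank} : Set ℕ) ∈ nhds ((Amat N M s).rank) :=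
            (isOpen_discrete _).mem_nhds rfl
          simpa [Set.setOf_eq_eq_singleton, eq_comm] using this
        have := hcont i₀ (Amat N M s) hi₀ hsing
        rw [hrank] at this; exact this
      obtain ⟨W, hWopen, hsW, hWsub⟩ := mem_nhdsWithin.mp hmem
      -- pick a fresh coordinate j
      obtain ⟨j, hj⟩ : ∃ j, j ∉ T := by
        by_contra hcon
        push_neg at hcon
        have : T = Finset.univ := Finset.eq_univ_iff_forall.mpr hcon
        rw [this, Finset.card_univ, Fintype.card_fin] at hTcard
        omega
      have hsj : s j = 0 := by
        by_contra hne
        exact hj ((hpat j).mp hne)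
      set V' : Set (Fin d → ℝ) := V ∩ (Amat N M ⁻¹' W) with hV'
      have hV'open : IsOpen V' := hVopen.inter (hWopen.preimage (Amat_continuous N M))
      have hsV' : s ∈ V' := ⟨hsV, hsW⟩
      -- pick small nonzero δ so the perturbed point stays in V'
      have htend : Filter.Tendsto (fun δ : ℝ => Function.update s j δ) (nhds 0) (nhds s) := by
        have hc : Continuous fun δ : ℝ => Function.update s j δ :=
          continuous_const.update j continuous_id
        have h0 : Function.update s j (0 : ℝ) = s := by
          funext j'
          by_cases h : j' = j
          · subst h; simp [hsj]
          · simp [Function.update_of_ne h]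
        simpa [h0] using hc.tendsto 0
      have hev : ∀ᶠ δ in nhds (0 : ℝ), Function.update s j δ ∈ V' :=
        htend.eventually (hV'open.mem_nhds hsV')
      obtain ⟨δ, hδV', hδ0⟩ : ∃ δ : ℝ, Function.update s j δ ∈ V' ∧ δ ≠ 0 := by
        have h1 : ∀ᶠ δ in nhdsWithin (0 : ℝ) {(0:ℝ)}ᶜ, Function.update s j δ ∈ V' :=
          hev.filter_mono nhdsWithin_le_nhds
        have h2 : ∀ᶠ δ in nhdsWithin (0 : ℝ) {(0:ℝ)}ᶜ, δ ∈ ({(0:ℝ)}ᶜ : Set ℝ) :=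
          eventually_mem_nhdsWithin
        obtain ⟨δ, hδ1, hδ2⟩ := (h1.and h2).exists
        exact ⟨δ, hδ1, by simpa using hδ2⟩
      refine ⟨Function.update s j δ, insert j T, insert i₀ S, V', hV'open, hδV', ?_, ?_, ?_, ?_⟩
      · intro j'
        by_cases h : j' = j
        · subst h; simp [hδ0]
        · simp [Function.update_of_ne h, hpat j', h]
      · rw [Finset.card_insert_of_notMem hj, hTcard]
      · rw [Finset.card_insert_of_notMem hi₀S, hScard]
      · intro i hi t htV' hDt
        rcases Finset.mem_insert.mp hi with h | h
        · subst h
          have : (Amat N M t).rank = k := hWsub ⟨htV'.2, hDt⟩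
          omega
        · have := hinv i h t htV'.1 hDt
          omega
  obtain ⟨s, T, S, V, hVopen, hsV, hpat, hTcard, hScard, hinv⟩ := key d le_rfl
  have hrank : (Amat N M s).rank = d := by
    rw [rank_Amat_of_pattern N M s T hpat, hTcard]
  obtain ⟨i₀, hi₀⟩ : ∃ i, Amat N M s ∈ D i := by
    have : Amat N M s ∈ ⋃ i, D i := by rw [hcov]; exact Set.mem_univ _
    exact Set.mem_iUnion.mp this
  have hi₀S : i₀ ∉ S := by
    intro h
    exact absurd hrank (Nat.ne_of_lt (hinv i₀ h s hsV hi₀))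
  have hle : (insert i₀ S).card ≤ Fintype.card (Fin n) := Finset.card_le_univ _
  rw [Finset.card_insert_of_notMem hi₀S, hScard, Fintype.card_fin] at hle
  exact hle

/-- Existence of a cover by the `min N M + 1` rank level sets. -/
lemma rank_pieces_exist (N M : ℕ) :
    ∃ D : Fin (min N M + 1) → Set (Matrix (Fin N) (Fin M) ℝ),
      (⋃ i, D i) = Set.univ ∧
      ∀ i, ContinuousOn (fun A : Matrix (Fin N) (Fin M) ℝ => A.rank) (D i) := by
  refine ⟨fun i => {A | A.rank = (i : ℕ)}, ?_, ?_⟩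
  · ext A
    simp only [Set.mem_iUnion, Set.mem_univ, iff_true]
    have h1 : A.rank ≤ N := by
      simpa using A.rank_le_card_height
    have h2 : A.rank ≤ M := by
      simpa using A.rank_le_card_width
    refine ⟨⟨A.rank, ?_⟩, rfl⟩
    omega
  · intro i
    exact continuousOn_const.congr fun A hA => hA

/-- The rank function on real `N × M` matrices is `(min N M + 1)`-continuous
(being constant on each level set `{A : rank A = k}`) but not `(min N M)`-continuous;
the least number of pieces making it piecewise continuous is `min N M + 1`. -/
theorem rank_exactly_d_plus_one_continuous (N M : ℕ) (hN : 1 ≤ N) (hM : 1 ≤ M) :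
    (∀ k : ℕ, ∀ A B : Matrix (Fin N) (Fin M) ℝ,
        A.rank = k → B.rank = k → A.rank = B.rank) ∧
    (∃ D : Fin (min N M + 1) → Set (Matrix (Fin N) (Fin M) ℝ),
      (⋃ i, D i) = Set.univ ∧
      ∀ i, ContinuousOn (fun A : Matrix (Fin N) (Fin M) ℝ => A.rank) (D i)) ∧
    (¬ ∃ D : Fin (min N M) → Set (Matrix (Fin N) (Fin M) ℝ),
      (⋃ i, D i) = Set.univ ∧
      ∀ i, ContinuousOn (fun A : Matrix (Fin N) (Fin M) ℝ => A.rank) (D i)) ∧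
    IsLeast {k : ℕ | ∃ D : Fin k → Set (Matrix (Fin N) (Fin M) ℝ),
      (⋃ i, D i) = Set.univ ∧
      ∀ i, ContinuousOn (fun A : Matrix (Fin N) (Fin M) ℝ => A.rank) (D i)}
      (min N M + 1) := by
  refine ⟨fun k A B hA hB => by rw [hA, hB], rank_pieces_exist N M, ?_, ?_⟩
  · rintro ⟨D, hcov, hcont⟩
    have := rank_pieces_lower_bound N M (min N M) D hcov hcont
    omega
  · exact ⟨rank_pieces_exist N M,
      fun n ⟨D, hcov, hcont⟩ => rank_pieces_lower_bound N M n D hcov hcont⟩
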